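/- For all complex z, √2 · θ_{0,1/2}(z,i)² = θ_{0,0}(z,i)² + θ_{1/2,1/2}(z,i)² and √2 · θ_{1/2,0}(z,i)² = θ_{0,0}(z,i)² − θ_{1/2,1/2}(z,i)². -/

import Mathlib

open Complex Real

/-- Theta function with characteristics a, b:
θ_{a,b}(z,τ) = Σ_{n∈ℤ} exp(πi(n+a)²τ + 2πi(n+a)(z+b)). -/
noncomputable def theta (a b : ℝ) (z τ : ℂ) : ℂ :=
  ∑' n : ℤ, Complex.exp (Real.pi * Complex.I * ((n : ℂ) + (a : ℂ))^2 * τ +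
    2 * Real.pi * Complex.I * ((n : ℂ) + (a : ℂ)) * (z + (b : ℂ)))

namespace ThetaQuadAux

noncomputable section

/-- summand of `theta a b z I` -/
def tt (z : ℂ) (a b : ℝ) (n : ℤ) : ℂ :=
  Complex.exp (Real.pi * Complex.I * ((n : ℂ) + (a : ℂ))^2 * Complex.I +
    2 * Real.pi * Complex.I * ((n : ℂ) + (a : ℂ)) * (z + (b : ℂ)))

lemma tt_eq (z : ℂ) (a b : ℝ) (n : ℤ) :
    tt z a b n = cexp (Real.pi * Complex.I * (a:ℂ)^2 * Complex.I +
      2 * Real.pi * Complex.I * (a:ℂ) * (z + (b:ℂ))) *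
      jacobiTheta₂_term n (z + (b:ℂ) + (a:ℂ) * Complex.I) Complex.I := by
  rw [tt, jacobiTheta₂_term, ← Complex.exp_add]
  congr 1
  ring

lemma im_I_div_two : (0:ℝ) < (Complex.I / 2).im := by
  simp [Complex.div_im]

lemma summable_norm_term (w τ : ℂ) (hτ : 0 < τ.im) :
    Summable fun n : ℤ => ‖jacobiTheta₂_term n w τ‖ := by
  refine (summable_pow_mul_jacobiTheta₂_term_bound |w.im| hτ 0).of_nonneg_of_le
    (fun n => norm_nonneg _) ?_
  simpa only [pow_zero, one_mul] using norm_jacobiTheta₂_term_le hτ le_rfl le_rfl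

lemma summable_norm_tt (z : ℂ) (a b : ℝ) : Summable fun n : ℤ => ‖tt z a b n‖ := by
  have h := (summable_norm_term (z + (b:ℂ) + (a:ℂ) * Complex.I) Complex.I (by simp)).mul_left
    (‖cexp (Real.pi * Complex.I * (a:ℂ)^2 * Complex.I +
      2 * Real.pi * Complex.I * (a:ℂ) * (z + (b:ℂ)))‖)
  refine h.congr fun n => ?_
  rw [tt_eq, norm_mul]

lemma summable_norm_iteE {f : ℤ → ℂ} (hf : Summable fun n => ‖f n‖) :
    Summable fun n : ℤ => ‖(if Even n then f n else 0 : ℂ)‖ := by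
  refine hf.of_nonneg_of_le (fun n => norm_nonneg _) fun n => ?_
  split
  · exact le_rfl
  · simp

lemma summable_norm_iteO {f : ℤ → ℂ} (hf : Summable fun n => ‖f n‖) :
    Summable fun n : ℤ => ‖(if Even n then 0 else f n : ℂ)‖ := by
  refine hf.of_nonneg_of_le (fun n => norm_nonneg _) fun n => ?_
  split
  · simp
  · exact le_rfl

/-- The rotation `(m, n) ↦ (m + n, m - n)`. -/
def rot : ℤ × ℤ → ℤ × ℤ := fun mn => (mn.1 + mn.2, mn.1 - mn.2)

lemma rot_inj : Function.Injective rot := by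
  rintro ⟨m, n⟩ ⟨m', n'⟩ h
  simp only [rot, Prod.mk.injEq] at h
  obtain ⟨h1, h2⟩ := h
  simp only [Prod.mk.injEq]
  exact ⟨by omega, by omega⟩

lemma rot_range {pq : ℤ × ℤ} (h : Even (pq.1 + pq.2)) : pq ∈ Set.range rot := by
  obtain ⟨p, q⟩ := pq
  obtain ⟨r, hr⟩ := h
  exact ⟨(r, p - r), by simp only [rot, Prod.mk.injEq]; omega⟩

/-- Master rotation lemma for the square of a theta series at `τ = I`. -/
lemma theta_sq (z : ℂ) (a b : ℝ) :
    theta a b z Complex.I ^ 2 = ∑' pq : ℤ × ℤ, (if Even (pq.1 + pq.2) then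
      cexp (2 * Real.pi * Complex.I * ((pq.1 : ℂ) + 2 * (a:ℂ)) * (z + (b:ℂ)) +
        Real.pi * Complex.I * ((pq.1 : ℂ) + 2 * (a:ℂ))^2 * (Complex.I / 2)) *
      cexp (Real.pi * Complex.I * ((pq.2 : ℂ))^2 * (Complex.I / 2)) else 0) := by
  have hsum := summable_norm_tt z a b
  have h1 : theta a b z Complex.I = ∑' n : ℤ, tt z a b n := rfl
  rw [sq, h1, tsum_mul_tsum_of_summable_norm hsum hsum]
  rw [← rot_inj.tsum_eq (f := fun pq : ℤ × ℤ => (if Even (pq.1 + pq.2) then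
      cexp (2 * Real.pi * Complex.I * ((pq.1 : ℂ) + 2 * (a:ℂ)) * (z + (b:ℂ)) +
        Real.pi * Complex.I * ((pq.1 : ℂ) + 2 * (a:ℂ))^2 * (Complex.I / 2)) *
      cexp (Real.pi * Complex.I * ((pq.2 : ℂ))^2 * (Complex.I / 2)) else 0))
    (by intro pq hpq
        simp only [Function.mem_support] at hpq
        by_contra h
        exact hpq (if_neg fun he => h (rot_range he)))]
  refine tsum_congr fun mn => ?_
  obtain ⟨m, n⟩ := mn
  simp only [rot]
  have he : Even (m + n + (m - n)) := ⟨m, by ring⟩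
  refine Eq.trans ?_ (if_pos he).symm
  show tt z a b m * tt z a b n = _
  simp only [tt, ← Complex.exp_add]
  congr 1
  push_cast
  ring

/-- Parity splitting of the constrained double sum into products. -/
lemma prod_split (u v : ℤ → ℂ) (hu : Summable fun p => ‖u p‖) (hv : Summable fun q => ‖v q‖) :
    (∑' pq : ℤ × ℤ, if Even (pq.1 + pq.2) then u pq.1 * v pq.2 else 0)
      = (∑' p, if Even p then u p else 0) * (∑' q, if Even q then v q else 0)
      + (∑' p, if Even p then 0 else u p) * (∑' q, if Even q then 0 else v q) := by
  have huE := summable_norm_iteE hu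
  have hvE := summable_norm_iteE hv
  have huO := summable_norm_iteO hu
  have hvO := summable_norm_iteO hv
  rw [tsum_mul_tsum_of_summable_norm huE hvE, tsum_mul_tsum_of_summable_norm huO hvO,
    ← Summable.tsum_add (summable_mul_of_summable_norm huE hvE) (summable_mul_of_summable_norm huO hvO)]
  refine tsum_congr fun pq => ?_
  obtain ⟨p, q⟩ := pq
  rcases Int.even_or_odd p with hp | hp <;> rcases Int.even_or_odd q with hq | hq
  · simp [Int.even_add, hp, hq]
  · simp [Int.even_add, hp, Int.not_even_iff_odd.mpr hq]
  · simp [Int.even_add, Int.not_even_iff_odd.mpr hp, hq]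
  · simp [Int.even_add, Int.not_even_iff_odd.mpr hp, Int.not_even_iff_odd.mpr hq]

/-- the four building blocks -/
def EE (z : ℂ) : ℂ := ∑' p : ℤ, if Even p then jacobiTheta₂_term p z (Complex.I / 2) else 0

def OO (z : ℂ) : ℂ := ∑' p : ℤ, if Even p then 0 else jacobiTheta₂_term p z (Complex.I / 2)

def AA : ℂ := ∑' q : ℤ, if Even q then jacobiTheta₂_term q 0 (Complex.I / 2) else 0

def BB : ℂ := ∑' q : ℤ, if Even q then 0 else jacobiTheta₂_term q 0 (Complex.I / 2)

lemma exp_pi_I_even {p : ℤ} (hp : Even p) : cexp (Real.pi * Complex.I * (p : ℂ)) = 1 := by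
  obtain ⟨k, hk⟩ := hp
  subst hk
  rw [show (Real.pi : ℂ) * Complex.I * ((k + k : ℤ) : ℂ) = (k : ℂ) * (2 * Real.pi * Complex.I) by
    push_cast; ring, Complex.exp_int_mul_two_pi_mul_I]

lemma exp_pi_I_odd {p : ℤ} (hp : ¬ Even p) : cexp (Real.pi * Complex.I * (p : ℂ)) = -1 := by
  obtain ⟨k, hk⟩ := Int.not_even_iff_odd.mp hp
  subst hk
  rw [show (Real.pi : ℂ) * Complex.I * ((2 * k + 1 : ℤ) : ℂ) =
    (k : ℂ) * (2 * Real.pi * Complex.I) + Real.pi * Complex.I by push_cast; ring,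
    Complex.exp_add, Complex.exp_int_mul_two_pi_mul_I, Complex.exp_pi_mul_I, one_mul]

lemma term_half (z : ℂ) (p : ℤ) :
    jacobiTheta₂_term p (z + ((1/2 : ℝ) : ℂ)) (Complex.I / 2) =
      cexp (Real.pi * Complex.I * (p : ℂ)) * jacobiTheta₂_term p z (Complex.I / 2) := by
  rw [jacobiTheta₂_term, jacobiTheta₂_term, ← Complex.exp_add]
  congr 1
  push_cast
  ring

lemma vterm (q : ℤ) : cexp (Real.pi * Complex.I * ((q : ℂ))^2 * (Complex.I / 2)) =
    jacobiTheta₂_term q 0 (Complex.I / 2) := by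
  rw [jacobiTheta₂_term]
  congr 1
  ring

/-- `a = 0` squares. -/
lemma sq_zero (z : ℂ) (b : ℝ) :
    theta 0 b z Complex.I ^ 2 =
      (∑' p : ℤ, if Even p then jacobiTheta₂_term p (z + (b:ℂ)) (Complex.I / 2) else 0) * AA
      + (∑' p : ℤ, if Even p then 0 else jacobiTheta₂_term p (z + (b:ℂ)) (Complex.I / 2)) * BB := by
  rw [theta_sq z 0 b]
  have h1 : ∀ pq : ℤ × ℤ, (if Even (pq.1 + pq.2) then
      cexp (2 * Real.pi * Complex.I * ((pq.1 : ℂ) + 2 * ((0:ℝ):ℂ)) * (z + (b:ℂ)) +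
        Real.pi * Complex.I * ((pq.1 : ℂ) + 2 * ((0:ℝ):ℂ))^2 * (Complex.I / 2)) *
      cexp (Real.pi * Complex.I * ((pq.2 : ℂ))^2 * (Complex.I / 2)) else 0) =
      (if Even (pq.1 + pq.2) then jacobiTheta₂_term pq.1 (z + (b:ℂ)) (Complex.I / 2) *
        jacobiTheta₂_term pq.2 0 (Complex.I / 2) else 0) := by
    intro pq
    simp only [jacobiTheta₂_term]
    rcases em (Even (pq.1 + pq.2)) with h | h
    · rw [if_pos h, if_pos h, ← Complex.exp_add, ← Complex.exp_add]
      congr 1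
      push_cast
      ring
    · rw [if_neg h, if_neg h]
  rw [tsum_congr h1, prod_split _ _ (summable_norm_term _ _ im_I_div_two)
    (summable_norm_term _ _ im_I_div_two)]
  rfl

/-- `a = 1/2` squares, before reindexing. -/
lemma sq_half (z : ℂ) (b : ℝ) :
    theta (1/2 : ℝ) b z Complex.I ^ 2 =
      (∑' p : ℤ, if Even p then jacobiTheta₂_term (p + 1) (z + (b:ℂ)) (Complex.I / 2) else 0) * AA
      + (∑' p : ℤ, if Even p then 0 else
          jacobiTheta₂_term (p + 1) (z + (b:ℂ)) (Complex.I / 2)) * BB := by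
  rw [theta_sq z (1/2 : ℝ) b]
  have h1 : ∀ pq : ℤ × ℤ, (if Even (pq.1 + pq.2) then
      cexp (2 * Real.pi * Complex.I * ((pq.1 : ℂ) + 2 * (((1/2 : ℝ)):ℂ)) * (z + (b:ℂ)) +
        Real.pi * Complex.I * ((pq.1 : ℂ) + 2 * (((1/2 : ℝ)):ℂ))^2 * (Complex.I / 2)) *
      cexp (Real.pi * Complex.I * ((pq.2 : ℂ))^2 * (Complex.I / 2)) else 0) =
      (if Even (pq.1 + pq.2) then jacobiTheta₂_term (pq.1 + 1) (z + (b:ℂ)) (Complex.I / 2) *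
        jacobiTheta₂_term pq.2 0 (Complex.I / 2) else 0) := by
    intro pq
    simp only [jacobiTheta₂_term]
    rcases em (Even (pq.1 + pq.2)) with h | h
    · rw [if_pos h, if_pos h, ← Complex.exp_add, ← Complex.exp_add]
      congr 1
      push_cast
      ring
    · rw [if_neg h, if_neg h]
  have hsum : Summable fun p : ℤ => ‖jacobiTheta₂_term (p + 1) (z + (b:ℂ)) (Complex.I / 2)‖ := by
    have h := summable_norm_term (z + (b:ℂ)) (Complex.I / 2) im_I_div_two
    exact ((Equiv.addRight (1:ℤ)).summable_iff
      (f := fun p : ℤ => ‖jacobiTheta₂_term p (z + (b:ℂ)) (Complex.I / 2)‖)).mpr h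
  rw [tsum_congr h1, prod_split _ _ hsum (summable_norm_term _ _ im_I_div_two)]
  rfl

/-- Reindexing: even part of the shifted series is the odd part of the unshifted one. -/
lemma shift_even (w : ℂ) :
    (∑' p : ℤ, if Even p then jacobiTheta₂_term (p + 1) w (Complex.I / 2) else 0) =
      ∑' p : ℤ, if Even p then 0 else jacobiTheta₂_term p w (Complex.I / 2) := by
  have h := (Equiv.addRight (1:ℤ)).tsum_eq
    (f := fun p : ℤ => if Even p then 0 else jacobiTheta₂_term p w (Complex.I / 2))
  rw [← h]
  refine tsum_congr fun p => ?_
  simp only [Equiv.coe_addRight]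
  rcases Int.even_or_odd p with hp | hp
  · have h2 : ¬ Even (p + 1) := by simp [Int.even_add_one, hp]
    rw [if_pos hp]; exact (if_neg h2).symm
  · have h2 : Even (p + 1) := by simp [Int.even_add_one, Int.not_even_iff_odd.mpr hp, hp]
    rw [if_neg (Int.not_even_iff_odd.mpr hp)]; exact (if_pos h2).symm

lemma shift_odd (w : ℂ) :
    (∑' p : ℤ, if Even p then 0 else jacobiTheta₂_term (p + 1) w (Complex.I / 2)) =
      ∑' p : ℤ, if Even p then jacobiTheta₂_term p w (Complex.I / 2) else 0 := by
  have h := (Equiv.addRight (1:ℤ)).tsum_eq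
    (f := fun p : ℤ => if Even p then jacobiTheta₂_term p w (Complex.I / 2) else 0)
  rw [← h]
  refine tsum_congr fun p => ?_
  simp only [Equiv.coe_addRight]
  rcases Int.even_or_odd p with hp | hp
  · have h2 : ¬ Even (p + 1) := by simp [Int.even_add_one, hp]
    rw [if_pos hp]; exact (if_neg h2).symm
  · have h2 : Even (p + 1) := by simp [Int.even_add_one, Int.not_even_iff_odd.mpr hp, hp]
    rw [if_neg (Int.not_even_iff_odd.mpr hp)]; exact (if_pos h2).symm

lemma sq00 (z : ℂ) : theta 0 0 z Complex.I ^ 2 = EE z * AA + OO z * BB := by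
  have h := sq_zero z 0
  simpa [EE, OO] using h

lemma half_even (z : ℂ) :
    (∑' p : ℤ, if Even p then jacobiTheta₂_term p (z + ((1/2 : ℝ):ℂ)) (Complex.I / 2) else 0)
      = EE z := by
  refine tsum_congr fun p => ?_
  rcases Int.even_or_odd p with hp | hp
  · rw [if_pos hp, if_pos hp, term_half, exp_pi_I_even hp, one_mul]
  · rw [if_neg (Int.not_even_iff_odd.mpr hp), if_neg (Int.not_even_iff_odd.mpr hp)]

lemma half_odd (z : ℂ) :
    (∑' p : ℤ, if Even p then 0 else jacobiTheta₂_term p (z + ((1/2 : ℝ):ℂ)) (Complex.I / 2))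
      = - OO z := by
  rw [OO, ← tsum_neg]
  refine tsum_congr fun p => ?_
  rcases Int.even_or_odd p with hp | hp
  · rw [if_pos hp, if_pos hp, neg_zero]
  · rw [if_neg (Int.not_even_iff_odd.mpr hp), if_neg (Int.not_even_iff_odd.mpr hp), term_half,
      exp_pi_I_odd (Int.not_even_iff_odd.mpr hp), neg_one_mul]

lemma sq0h (z : ℂ) : theta 0 (1/2 : ℝ) z Complex.I ^ 2 = EE z * AA - OO z * BB := by
  have h := sq_zero z (1/2 : ℝ)
  rw [half_even, half_odd] at h
  rw [h]
  ring

lemma sqh0 (z : ℂ) : theta (1/2 : ℝ) 0 z Complex.I ^ 2 = OO z * AA + EE z * BB := by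
  have h := sq_half z 0
  simp only [Complex.ofReal_zero, add_zero] at h
  rw [shift_even, shift_odd] at h
  exact h

lemma sqhh (z : ℂ) :
    theta (1/2 : ℝ) (1/2 : ℝ) z Complex.I ^ 2 = - (OO z * AA) + EE z * BB := by
  have h := sq_half z (1/2 : ℝ)
  rw [shift_even, shift_odd, half_even, half_odd] at h
  rw [h]
  ring

lemma summable_cE : Summable fun q : ℤ =>
    (if Even q then jacobiTheta₂_term q 0 (Complex.I / 2) else 0) :=
  (summable_norm_iteE (summable_norm_term 0 _ im_I_div_two)).of_norm

lemma summable_cO : Summable fun q : ℤ =>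
    (if Even q then 0 else jacobiTheta₂_term q 0 (Complex.I / 2)) :=
  (summable_norm_iteO (summable_norm_term 0 _ im_I_div_two)).of_norm

lemma sumAB : AA + BB = jacobiTheta₂ 0 (Complex.I / 2) := by
  rw [AA, BB, ← Summable.tsum_add summable_cE summable_cO, jacobiTheta₂]
  refine tsum_congr fun q => ?_
  split <;> simp

lemma subAB : AA - BB = jacobiTheta₂ (1/2 : ℂ) (Complex.I / 2) := by
  rw [AA, BB, ← Summable.tsum_sub summable_cE summable_cO, jacobiTheta₂]
  refine tsum_congr fun q => ?_
  have h : jacobiTheta₂_term q (1/2 : ℂ) (Complex.I / 2) =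
      cexp (Real.pi * Complex.I * (q : ℂ)) * jacobiTheta₂_term q 0 (Complex.I / 2) := by
    rw [jacobiTheta₂_term, jacobiTheta₂_term, ← Complex.exp_add]
    congr 1
    ring
  rcases Int.even_or_odd q with hq | hq
  · rw [if_pos hq, if_pos hq, sub_zero, h, exp_pi_I_even hq, one_mul]
  · rw [if_neg (Int.not_even_iff_odd.mpr hq), if_neg (Int.not_even_iff_odd.mpr hq), zero_sub,
      h, exp_pi_I_odd (Int.not_even_iff_odd.mpr hq), neg_one_mul]

/-- Double the lattice: the even part is a theta at `2I`. -/
lemma AAeq : AA = jacobiTheta₂ 0 (2 * Complex.I) := by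
  rw [AA, jacobiTheta₂]
  have hinj : Function.Injective (fun k : ℤ => 2 * k) := by
    intro a b h
    have h' : 2 * a = 2 * b := h
    omega
  rw [← hinj.tsum_eq (f := fun q : ℤ =>
    if Even q then jacobiTheta₂_term q 0 (Complex.I / 2) else 0) ?_]
  · refine tsum_congr fun k => ?_
    have he : Even ((fun k : ℤ => 2 * k) k) := ⟨k, by ring⟩
    rw [if_pos he]
    simp only [jacobiTheta₂_term]
    congr 1
    push_cast
    ring
  · intro q hq
    simp only [Function.mem_support] at hq
    rcases Int.even_or_odd q with h | h
    · obtain ⟨r, hr⟩ := h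
      exact ⟨r, by show 2 * r = q; omega⟩
    · exact absurd (if_neg (Int.not_even_iff_odd.mpr h)) hq

lemma BBeq : BB = cexp (Real.pi * Complex.I * Complex.I / 2) *
    jacobiTheta₂ Complex.I (2 * Complex.I) := by
  rw [BB, jacobiTheta₂, ← tsum_mul_left]
  have hinj : Function.Injective (fun k : ℤ => 2 * k + 1) := by
    intro a b h
    have h' : 2 * a + 1 = 2 * b + 1 := h
    omega
  rw [← hinj.tsum_eq (f := fun q : ℤ =>
    if Even q then 0 else jacobiTheta₂_term q 0 (Complex.I / 2)) ?_]
  · refine tsum_congr fun k => ?_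
    have ho : ¬ Even ((fun k : ℤ => 2 * k + 1) k) :=
      Int.not_even_iff_odd.mpr ⟨k, by ring⟩
    rw [if_neg ho]
    simp only [jacobiTheta₂_term]
    rw [← Complex.exp_add]
    congr 1
    push_cast
    ring
  · intro q hq
    simp only [Function.mem_support] at hq
    rcases Int.even_or_odd q with h | h
    · exact absurd (if_pos h) hq
    · obtain ⟨r, hr⟩ := h
      exact ⟨r, by show 2 * r + 1 = q; omega⟩

lemma sqrt2_ne : ((Real.sqrt 2 : ℝ) : ℂ) ≠ 0 :=
  Complex.ofReal_ne_zero.mpr (ne_of_gt (Real.sqrt_pos.mpr two_pos))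

lemma mul_inv_sqrt2 : ((Real.sqrt 2 : ℝ) : ℂ) * (1 / ((Real.sqrt 2 : ℝ) : ℂ)) = 1 :=
  mul_one_div_cancel sqrt2_ne

lemma two_cpow_half : (2 : ℂ) ^ ((1:ℂ)/2) = ((Real.sqrt 2 : ℝ) : ℂ) := by
  rw [show ((1:ℂ)/2) = (((1/2 : ℝ)):ℂ) by norm_num, show (2:ℂ) = ((2:ℝ):ℂ) by norm_num,
    ← Complex.ofReal_cpow (by norm_num : (0:ℝ) ≤ 2),
    show (2:ℝ) ^ (1/2 : ℝ) = Real.sqrt 2 from (Real.sqrt_eq_rpow 2).symm]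

lemma key2 : ((Real.sqrt 2 : ℝ) : ℂ) * AA = AA + BB := by
  rw [sumAB, AAeq]
  have h := jacobiTheta₂_functional_equation 0 (2 * Complex.I)
  have h1 : -Complex.I * (2 * Complex.I) = 2 := by
    rw [show -Complex.I * (2 * Complex.I) = -(2 * (Complex.I * Complex.I)) by ring,
      Complex.I_mul_I]
    ring
  have h2 : (0:ℂ) / (2 * Complex.I) = 0 := zero_div _
  have h3 : (-1 : ℂ) / (2 * Complex.I) = Complex.I / 2 := by
    rw [div_eq_div_iff (by simp [Complex.I_ne_zero]) (by norm_num : (2:ℂ) ≠ 0),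
      show Complex.I * (2 * Complex.I) = 2 * (Complex.I * Complex.I) by ring, Complex.I_mul_I]
    ring
  have h4 : cexp (-(Real.pi:ℂ) * Complex.I * (0:ℂ) ^ 2 / (2 * Complex.I)) = 1 := by
    norm_num
  rw [h1, h2, h3, h4, two_cpow_half, mul_one] at h
  rw [h, show ((Real.sqrt 2 : ℝ) : ℂ) * (1 / ((Real.sqrt 2 : ℝ) : ℂ) *
    jacobiTheta₂ 0 (Complex.I / 2)) = (((Real.sqrt 2 : ℝ) : ℂ) * (1 / ((Real.sqrt 2 : ℝ) : ℂ))) *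
    jacobiTheta₂ 0 (Complex.I / 2) by ring, mul_inv_sqrt2, one_mul]

lemma key : ((Real.sqrt 2 : ℝ) : ℂ) * BB = AA - BB := by
  rw [subAB, BBeq]
  have h := jacobiTheta₂_functional_equation Complex.I (2 * Complex.I)
  have h1 : -Complex.I * (2 * Complex.I) = 2 := by
    rw [show -Complex.I * (2 * Complex.I) = -(2 * (Complex.I * Complex.I)) by ring,
      Complex.I_mul_I]
    ring
  have h2 : Complex.I / (2 * Complex.I) = 1/2 := by
    rw [div_eq_div_iff (by simp [Complex.I_ne_zero]) (by norm_num : (2:ℂ) ≠ 0)]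
    ring
  have h3 : (-1 : ℂ) / (2 * Complex.I) = Complex.I / 2 := by
    rw [div_eq_div_iff (by simp [Complex.I_ne_zero]) (by norm_num : (2:ℂ) ≠ 0),
      show Complex.I * (2 * Complex.I) = 2 * (Complex.I * Complex.I) by ring, Complex.I_mul_I]
    ring
  rw [h1, h2, h3, two_cpow_half] at h
  rw [h]
  have h5 : cexp (Real.pi * Complex.I * Complex.I / 2) *
      cexp (-(Real.pi:ℂ) * Complex.I * Complex.I ^ 2 / (2 * Complex.I)) = 1 := by
    rw [← Complex.exp_add, ← Complex.exp_zero]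
    congr 1
    field_simp [Complex.I_ne_zero]
    linear_combination (0:ℂ) * Complex.I_sq
  calc ((Real.sqrt 2 : ℝ) : ℂ) * (cexp (Real.pi * Complex.I * Complex.I / 2) *
        (1 / ((Real.sqrt 2 : ℝ) : ℂ) *
          cexp (-(Real.pi:ℂ) * Complex.I * Complex.I ^ 2 / (2 * Complex.I)) *
          jacobiTheta₂ (1/2 : ℂ) (Complex.I / 2)))
      = (((Real.sqrt 2 : ℝ) : ℂ) * (1 / ((Real.sqrt 2 : ℝ) : ℂ))) *
        ((cexp (Real.pi * Complex.I * Complex.I / 2) *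
          cexp (-(Real.pi:ℂ) * Complex.I * Complex.I ^ 2 / (2 * Complex.I))) *
          jacobiTheta₂ (1/2 : ℂ) (Complex.I / 2)) := by ring
    _ = jacobiTheta₂ (1/2 : ℂ) (Complex.I / 2) := by
        rw [mul_inv_sqrt2, h5, one_mul, one_mul]

end

end ThetaQuadAux

open ThetaQuadAux in
/-- Quadratic relations among theta functions at τ = i. -/
theorem theta_quadratic_relations (z : ℂ) :
    (Real.sqrt 2 : ℂ) * theta 0 (1/2) z Complex.I ^ 2 =
      theta 0 0 z Complex.I ^ 2 + theta (1/2) (1/2) z Complex.I ^ 2 ∧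
    (Real.sqrt 2 : ℂ) * theta (1/2) 0 z Complex.I ^ 2 =
      theta 0 0 z Complex.I ^ 2 - theta (1/2) (1/2) z Complex.I ^ 2 := by
  have e1 := sq00 z
  have e2 := sq0h z
  have e3 := sqh0 z
  have e4 := sqhh z
  have k1 := key
  have k2 := key2
  constructor
  · rw [e2, e1, e4]
    linear_combination (EE z) * k2 - (OO z) * k1
  · rw [e3, e1, e4]
    linear_combination (OO z) * k2 + (EE z) * k1
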